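/- Let F be a field of prime characteristic p, and let R: h(n) → gl(V) be a faithful finite-dimensional irreducible representation (F arbitrary). Then p^n divides dim V. -/

import Mathlib

open Module Polynomial

section RingAux
variable {S : Type*} [Ring S]

lemma comm_pow_aux (a x c : S) (h : a * x = x * a + c) (hc : a * c = c * a) :
    ∀ k : ℕ, a ^ (k + 1) * x = x * a ^ (k + 1) + (k + 1) • (a ^ k * c) := by
  intro k
  induction k with
  | zero => simpa using h
  | succ k ih =>
    have hck : c * a ^ (k + 1) = a ^ (k + 1) * c :=
      ((show Commute a c from hc).symm.pow_right (k + 1)).eq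
    calc a ^ (k + 2) * x = a * (a ^ (k + 1) * x) := by
          rw [← mul_assoc, ← pow_succ']
      _ = a * (x * a ^ (k + 1)) + (k + 1) • (a * (a ^ k * c)) := by
          rw [ih, mul_add, mul_smul_comm]
      _ = (x * a + c) * a ^ (k + 1) + (k + 1) • (a ^ (k + 1) * c) := by
          rw [← mul_assoc, ← h, ← mul_assoc, ← pow_succ']
      _ = x * a ^ (k + 2) + (c * a ^ (k + 1) + (k + 1) • (a ^ (k + 1) * c)) := by
          rw [add_mul, mul_assoc, ← pow_succ']; ring_nf
          abel
      _ = x * a ^ (k + 2) + (k + 2) • (a ^ (k + 1) * c) := by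
          rw [hck, ← succ_nsmul' (a ^ (k + 1) * c) (k + 1)]

lemma pow_char_commute (p : ℕ) [hp : Fact p.Prime] [CharP S p]
    (a x c : S) (h : a * x = x * a + c) (hc : a * c = c * a) :
    Commute (a ^ p) x := by
  have key := comm_pow_aux a x c h hc (p - 1)
  have hp1 : p - 1 + 1 = p := Nat.succ_pred_eq_of_pos hp.out.pos
  rw [hp1] at key
  have hz : p • (a ^ (p - 1) * c) = 0 := by
    rw [nsmul_eq_mul]
    rw [show ((p : ℕ) : S) = 0 from CharP.cast_eq_zero S p, zero_mul]
  show a ^ p * x = x * a ^ p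
  rw [key, hz, add_zero]

end RingAux

open Module Polynomial

section Weyl
variable {E V : Type*} [Field E] [AddCommGroup V] [Module E V]

lemma heis_step (N B : Module.End E V) (hNB : ∀ v, N (B v) = B (N v) + v) :
    ∀ (k : ℕ) (w : V), N w = 0 → N ((B ^ k) w) = k • (B ^ (k - 1)) w := by
  intro k
  induction k with
  | zero => intro w hw; simpa using hw
  | succ k ih =>
    intro w hw
    rw [pow_succ', Module.End.mul_apply, hNB, ih w hw, map_nsmul]
    cases k with
    | zero => simp
    | succ m =>
      rw [Nat.succ_sub_one, Nat.succ_sub_one]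
      rw [show B ((B ^ m) w) = (B ^ (m + 1)) w by rw [pow_succ', Module.End.mul_apply]]
      rw [succ_nsmul, succ_nsmul, succ_nsmul]

lemma heis_iter (N B : Module.End E V) (hNB : ∀ v, N (B v) = B (N v) + v) :
    ∀ (m k : ℕ) (w : V), N w = 0 →
      (N ^ m) ((B ^ k) w) = (k.descFactorial m) • ((B ^ (k - m)) w) := by
  intro m
  induction m with
  | zero => intro k w _; simp
  | succ m ih =>
    intro k w hw
    rw [pow_succ', Module.End.mul_apply, ih k w hw, map_nsmul,
      heis_step N B hNB (k - m) w hw, smul_smul, Nat.sub_sub,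
      Nat.descFactorial_succ, mul_comm]

lemma weyl_dim (p : ℕ) [hp : Fact p.Prime] [CharP E p] [FiniteDimensional E V]
    (N B : Module.End E V) (hNB : N * B - B * N = 1) (hNp : N ^ p = 0) :
    finrank E V = p * finrank E (LinearMap.ker N) := by
  have hstep : ∀ v, N (B v) = B (N v) + v := by
    intro v
    have h := congrFun (congrArg DFunLike.coe hNB) v
    simp only [LinearMap.sub_apply, Module.End.mul_apply, Module.End.one_apply] at h
    rw [sub_eq_iff_eq_add] at h
    rw [h, add_comm]
  set W := LinearMap.ker N with hW
  set Φ : (Fin p → W) →ₗ[E] V :=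
    ∑ k : Fin p, (B ^ (k : ℕ)) ∘ₗ W.subtype ∘ₗ LinearMap.proj k with hΦdef
  have hΦ : ∀ f, Φ f = ∑ k : Fin p, (B ^ (k : ℕ)) (f k : V) := by
    intro f
    rw [hΦdef, LinearMap.sum_apply]
    rfl
  have hker : ∀ w : W, N (w : V) = 0 := fun w => w.2
  have hinjΦ : Function.Injective Φ := by
    rw [← LinearMap.ker_eq_bot, LinearMap.ker_eq_bot']
    intro f hf
    have hzero : ∀ j : ℕ, ∀ k : Fin p, p - j ≤ (k : ℕ) → f k = 0 := by
      intro j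
      induction j with
      | zero => intro k hk; exact absurd k.isLt (by omega)
      | succ j ihj =>
        intro k hk
        by_cases hk2 : p - j ≤ (k : ℕ)
        · exact ihj k hk2
        · have hmax : ∀ k' : Fin p, (k : ℕ) < (k' : ℕ) → f k' = 0 := by
            intro k' hk'; exact ihj k' (by omega)
          have h1 : (N ^ (k : ℕ)) (Φ f) = 0 := by rw [hf]; simp
          rw [hΦ, map_sum] at h1
          have h2 : ∀ k' : Fin p,
              (N ^ (k : ℕ)) ((B ^ (k' : ℕ)) (f k' : V)) =
                ((k' : ℕ).descFactorial (k : ℕ)) • ((B ^ ((k' : ℕ) - (k : ℕ))) (f k' : V)) :=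
            fun k' => heis_iter N B hstep _ _ _ (hker (f k'))
          simp only [h2] at h1
          rw [Finset.sum_eq_single k] at h1
          · rw [Nat.sub_self, pow_zero, Nat.descFactorial_self, Module.End.one_apply] at h1
            have h4 : (((k : ℕ).factorial : E)) • (f k : V) = 0 := by
              rw [Nat.cast_smul_eq_nsmul]; exact h1
            have h5 : (((k : ℕ).factorial : E)) ≠ 0 := by
              rw [Ne, CharP.cast_eq_zero_iff E p, Nat.Prime.dvd_factorial hp.out]
              omega
            rcases smul_eq_zero.mp h4 with h | h
            · exact absurd h h5
            · exact Subtype.ext h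
          · intro k' _ hne
            rcases Nat.lt_or_ge (k' : ℕ) (k : ℕ) with hlt | hge
            · rw [Nat.descFactorial_eq_zero_iff_lt.mpr hlt, zero_smul]
            · have : (k : ℕ) < (k' : ℕ) := by
                rcases Nat.eq_or_lt_of_le hge with he | hl
                · exact absurd (Fin.ext he.symm) hne
                · exact hl
              rw [hmax k' this]
              simp
          · intro h; exact absurd (Finset.mem_univ k) h
    funext k
    exact hzero p k (by omega)
  have hsurjΦ : Function.Surjective Φ := by
    have main : ∀ m : ℕ, m ≤ p → ∀ v : V, (N ^ m) v = 0 → v ∈ LinearMap.range Φ := by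
      intro m
      induction m with
      | zero =>
        intro _ v hv
        simp only [pow_zero, Module.End.one_apply] at hv
        rw [hv]; exact zero_mem _
      | succ m ihm =>
        intro hmp v hv
        have hmp' : m < p := by omega
        set u := (N ^ m) v with hu
        have hNu : N u = 0 := by
          rw [hu, ← Module.End.mul_apply, ← pow_succ']; exact hv
        set t : E := ((m.factorial : E)) with ht
        have hfac : t ≠ 0 := by
          rw [ht, Ne, CharP.cast_eq_zero_iff E p, Nat.Prime.dvd_factorial hp.out]
          omega
        set v' := v - t⁻¹ • ((B ^ m) u) with hv'
        have hNv' : (N ^ m) v' = 0 := by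
          rw [hv', map_sub, map_smul, heis_iter N B hstep m m u hNu,
            Nat.descFactorial_self, Nat.sub_self, pow_zero, Module.End.one_apply,
            ← Nat.cast_smul_eq_nsmul E, smul_smul, inv_mul_cancel₀ hfac, one_smul, sub_self]
        obtain ⟨g, hg⟩ := ihm (by omega) v' hNv'
        have hwmem : t⁻¹ • u ∈ W := by
          rw [hW, LinearMap.mem_ker, map_smul, hNu, smul_zero]
        have hsingle : Φ (Pi.single ⟨m, hmp'⟩ ⟨t⁻¹ • u, hwmem⟩) = t⁻¹ • ((B ^ m) u) := by
          rw [hΦ, Finset.sum_eq_single (⟨m, hmp'⟩ : Fin p)]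
          · rw [Pi.single_eq_same]
            simp [map_smul]
          · intro k _ hne
            rw [Pi.single_eq_of_ne hne]
            simp
          · intro h; exact absurd (Finset.mem_univ _) h
        refine ⟨g + Pi.single ⟨m, hmp'⟩ ⟨t⁻¹ • u, hwmem⟩, ?_⟩
        rw [map_add, hg, hsingle, hv', sub_add_cancel]
    intro v
    have hv : (N ^ p) v = 0 := by rw [hNp]; rfl
    exact main p le_rfl v hv
  have e : (Fin p → W) ≃ₗ[E] V := LinearEquiv.ofBijective Φ ⟨hinjΦ, hsurjΦ⟩
  calc finrank E V = finrank E (Fin p → W) := (LinearEquiv.finrank_eq e).symm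
    _ = p * finrank E W := by
        rw [Module.finrank_pi_fintype, Finset.sum_const, Finset.card_univ, Fintype.card_fin,
          smul_eq_mul]

end Weyl

open Module Polynomial

section Helpers
variable {E V : Type*} [Field E] [AddCommGroup V] [Module E V]

lemma restrict_pow {W : Submodule E V} (f : Module.End E V) (hf : ∀ x ∈ W, f x ∈ W)
    (k : ℕ) (x : W) :
    ((f.restrict hf ^ k) x : V) = (f ^ k) (x : V) := by
  induction k with
  | zero => rfl
  | succ k ih =>
    rw [pow_succ', pow_succ', Module.End.mul_apply, Module.End.mul_apply,
      LinearMap.restrict_coe_apply, ih]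

lemma pow_apply_eq {R R' M : Type*} [Semiring R] [Semiring R'] [AddCommMonoid M]
    [Module R M] [Module R' M] (g : Module.End R M) (g' : Module.End R' M)
    (h : ∀ v, g v = g' v) (k : ℕ) (v : M) : (g ^ k) v = (g' ^ k) v := by
  induction k with
  | zero => rfl
  | succ k ih =>
    rw [pow_succ', pow_succ', Module.End.mul_apply, Module.End.mul_apply, ih]
    exact h _

end Helpers
universe v

set_option maxHeartbeats 1000000 in
lemma weyl_key (p : ℕ) [hp : Fact p.Prime] (n : ℕ) :
    ∀ (E V : Type v) [Field E] [CharP E p] [AddCommGroup V] [Module E V]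
      [FiniteDimensional E V] (a b : Fin n → Module.End E V),
      (∀ i j, Commute (a i) (a j)) →
      (∀ i j, a i * b j - b j * a i = if i = j then 1 else 0) →
      (∀ i, ∃ α : E, a i ^ p = algebraMap E (Module.End E V) α) →
      p ^ n ∣ Module.finrank E V := by
  induction n with
  | zero => intro E V _ _ _ _ _ a b _ _ _; simpa using one_dvd _
  | succ n IH =>
    intro E V _ _ _ _ _ a b hcomm hrel hscal
    by_cases hV : Subsingleton V
    · have h0 : Module.finrank E V = 0 :=
        finrank_zero_iff_forall_zero.mpr fun x => Subsingleton.elim x 0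
      rw [h0]; exact dvd_zero _
    have hVnt : Nontrivial V := not_subsingleton_iff_nontrivial.mp hV
    obtain ⟨α, hα⟩ := hscal 0
    by_cases hroot : ∃ γ : E, γ ^ p = α
    · -- nilpotent case
      obtain ⟨γ, hγ⟩ := hroot
      haveI : Nontrivial (Module.End E V) := by
        obtain ⟨w, hw⟩ := exists_ne (0 : V)
        exact ⟨1, 0, fun h => hw (by
          have := congrFun (congrArg DFunLike.coe h) w
          simpa using this)⟩
      haveI : CharP (Module.End E V) p :=
        charP_of_injective_algebraMap (algebraMap E (Module.End E V)).injective p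
      set N : Module.End E V := a 0 - algebraMap E (Module.End E V) γ with hN
      have hcomN : Commute (a 0) (algebraMap E (Module.End E V) γ) :=
        (Algebra.commutes γ (a 0)).symm
      have hNp : N ^ p = 0 := by
        rw [hN, sub_pow_char_of_commute p hcomN, ← map_pow, hγ, hα, sub_self]
      have hNB : N * b 0 - b 0 * N = 1 := by
        have h0 := hrel 0 0
        rw [if_pos rfl] at h0
        rw [hN, sub_mul, mul_sub, Algebra.commutes γ (b 0), ← h0]
        abel
      set W := LinearMap.ker N with hW
      have hinv : ∀ T : Module.End E V, Commute T N → ∀ x ∈ W, T x ∈ W := by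
        intro T hT x hx
        rw [hW, LinearMap.mem_ker] at hx ⊢
        calc N (T x) = (N * T) x := rfl
          _ = (T * N) x := by rw [hT.symm.eq]
          _ = T (N x) := rfl
          _ = 0 := by rw [hx, map_zero]
      have hcommaN : ∀ i : Fin n, Commute (a i.succ) N := fun i =>
        ((hcomm i.succ 0).sub_right (Algebra.commutes γ (a i.succ)).symm)
      have hba0 : ∀ j : Fin n, Commute (b j.succ) (a 0) := by
        intro j
        have h := hrel 0 j.succ
        rw [if_neg (fun hh => Fin.succ_ne_zero j hh.symm)] at h
        exact ((show Commute (a 0) (b j.succ) from sub_eq_zero.mp h)).symm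
      have hcommbN : ∀ j : Fin n, Commute (b j.succ) N := fun j =>
        ((hba0 j).sub_right (Algebra.commutes γ (b j.succ)).symm)
      set a' : Fin n → Module.End E W := fun i => (a i.succ).restrict (hinv _ (hcommaN i)) with ha'
      set b' : Fin n → Module.End E W := fun j => (b j.succ).restrict (hinv _ (hcommbN j)) with hb'
      have happly : ∀ (T : Module.End E V) (hT) (x : W),
          ((T.restrict hT : Module.End E W) x : V) = T (x : V) := fun T hT x =>
        LinearMap.restrict_coe_apply T hT x
      have hcomm' : ∀ i j, Commute (a' i) (a' j) := by
        intro i j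
        ext x
        have h := congrFun (congrArg DFunLike.coe (hcomm i.succ j.succ).eq) (x : V)
        simp only [Module.End.mul_apply] at h
        show (((a' i * a' j) x : W) : V) = (((a' j * a' i) x : W) : V)
        simp only [Module.End.mul_apply, ha', happly]
        exact h
      have hrel' : ∀ i j, a' i * b' j - b' j * a' i = if i = j then 1 else 0 := by
        intro i j
        have h := congrFun (congrArg DFunLike.coe (hrel i.succ j.succ))
        by_cases hij : i = j
        · subst hij
          rw [if_pos rfl]
          ext x
          have hx := h (x : V)
          rw [if_pos rfl] at hx
          simp only [LinearMap.sub_apply, Module.End.mul_apply, Module.End.one_apply] at hx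
          show ((((a' i * b' i - b' i * a' i)) x : W) : V) = (((1 : Module.End E W) x : W) : V)
          simp only [LinearMap.sub_apply, Module.End.mul_apply, Module.End.one_apply,
            Submodule.coe_sub, ha', hb', happly]
          exact hx
        · rw [if_neg hij]
          ext x
          have hx := h (x : V)
          rw [if_neg (fun hh => hij (Fin.succ_inj.mp hh))] at hx
          simp only [LinearMap.sub_apply, Module.End.mul_apply, LinearMap.zero_apply] at hx
          show ((((a' i * b' j - b' j * a' i)) x : W) : V) = (((0 : Module.End E W) x : W) : V)
          simp only [LinearMap.sub_apply, Module.End.mul_apply, LinearMap.zero_apply,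
            Submodule.coe_sub, ZeroMemClass.coe_zero, ha', hb', happly]
          exact hx
      have hscal' : ∀ i, ∃ β : E, a' i ^ p = algebraMap E (Module.End E W) β := by
        intro i
        obtain ⟨β, hβ⟩ := hscal i.succ
        refine ⟨β, ?_⟩
        ext x
        simp only [ha']
        rw [restrict_pow (a i.succ) (hinv _ (hcommaN i)) p x]
        have hx := congrFun (congrArg DFunLike.coe hβ) (x : V)
        rw [hx]
        simp [Module.algebraMap_end_apply]
      have hdvd := IH E W a' b' hcomm' hrel' hscal'
      have hdim := weyl_dim p N (b 0) hNB hNp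
      rw [pow_succ, mul_comm (p ^ n) p, hdim]
      exact mul_dvd_mul_left p hdvd
    · -- field extension case
      push_neg at hroot
      set f : Polynomial E := Polynomial.X ^ p - Polynomial.C α with hf
      have hirr : Irreducible f := X_pow_sub_C_irreducible_of_prime hp.out hroot
      haveI : Fact (Irreducible f) := ⟨hirr⟩
      have hfne : f ≠ 0 := hirr.ne_zero
      have haev0 : Polynomial.aeval (a 0) f = 0 := by
        rw [hf, map_sub, map_pow, Polynomial.aeval_X, Polynomial.aeval_C, hα, sub_self]
      have haev : ∀ g ∈ Ideal.span {f}, (Polynomial.aeval (a 0)).toRingHom g = 0 := by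
        intro g hg
        rw [Ideal.mem_span_singleton] at hg
        obtain ⟨c, rfl⟩ := hg
        show Polynomial.aeval (a 0) (f * c) = 0
        rw [map_mul, haev0, zero_mul]
      set E' := AdjoinRoot f with hE'
      set ρ : E' →+* Module.End E V :=
        Ideal.Quotient.lift (Ideal.span {f}) (Polynomial.aeval (a 0)).toRingHom haev with hρ
      have ρmk : ∀ g : Polynomial E, ρ (AdjoinRoot.mk f g) = Polynomial.aeval (a 0) g :=
        fun g => Ideal.Quotient.lift_mk _ _ _
      have ρalg : ∀ e : E, ρ (algebraMap E E' e) = algebraMap E (Module.End E V) e := by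
        intro e
        rw [AdjoinRoot.algebraMap_eq]
        show ρ (AdjoinRoot.mk f (Polynomial.C e)) = _
        rw [ρmk, Polynomial.aeval_C]
      letI : Module E' V := Module.compHom V ρ
      have hsmul : ∀ (x : E') (v : V), x • v = ρ x v := fun _ _ => rfl
      letI : IsScalarTower E E' V :=
        ⟨fun e x v => by
          simp only [hsmul]
          rw [Algebra.smul_def e x, map_mul, ρalg]
          rw [Module.End.mul_apply, Module.algebraMap_end_apply]⟩
      haveI : FiniteDimensional E' V := FiniteDimensional.right E E' V
      haveI : CharP E' p :=
        charP_of_injective_algebraMap (algebraMap E E').injective p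
      have hcommρ : ∀ T : Module.End E V, Commute (a 0) T →
          ∀ x : E', Commute (ρ x) T := by
        intro T hT x
        induction x using AdjoinRoot.induction_on with
        | ih g =>
          rw [ρmk g]
          have hmem : Polynomial.aeval (a 0) g ∈ Algebra.adjoin E {a 0} :=
            Polynomial.aeval_mem_adjoin_singleton E (a 0)
          have hle : Algebra.adjoin E {a 0} ≤ Subalgebra.centralizer E {T} := by
            apply Algebra.adjoin_le
            intro s hs
            rw [Set.mem_singleton_iff] at hs
            subst hs
            rw [SetLike.mem_coe, Subalgebra.mem_centralizer_iff]
            intro g' hg'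
            rw [Set.mem_singleton_iff] at hg'
            subst hg'
            exact hT.symm.eq
          have hty := (Subalgebra.mem_centralizer_iff E).mp (hle hmem) T rfl
          exact (show Commute ((Polynomial.aeval (a 0)) g) T from hty.symm)
      have hba0 : ∀ j : Fin n, Commute (a 0) (b j.succ) := by
        intro j
        have h := hrel 0 j.succ
        rw [if_neg (fun hh => Fin.succ_ne_zero j hh.symm)] at h
        exact (show Commute (a 0) (b j.succ) from sub_eq_zero.mp h)
      set a'' : Fin n → Module.End E' V := fun i =>
        { toFun := a i.succ
          map_add' := (a i.succ).map_add
          map_smul' := fun x v => by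
            simp only [RingHom.id_apply]
            rw [hsmul, hsmul]
            exact (congrFun (congrArg DFunLike.coe
              (hcommρ (a i.succ) (hcomm 0 i.succ) x).eq) v).symm } with ha''
      set b'' : Fin n → Module.End E' V := fun j =>
        { toFun := b j.succ
          map_add' := (b j.succ).map_add
          map_smul' := fun x v => by
            simp only [RingHom.id_apply]
            rw [hsmul, hsmul]
            exact (congrFun (congrArg DFunLike.coe
              (hcommρ (b j.succ) (hba0 j) x).eq) v).symm } with hb''
      have ha''apply : ∀ (i : Fin n) (v : V), a'' i v = a i.succ v := fun _ _ => rfl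
      have hb''apply : ∀ (j : Fin n) (v : V), b'' j v = b j.succ v := fun _ _ => rfl
      have hcomm'' : ∀ i j, Commute (a'' i) (a'' j) := by
        intro i j
        ext v
        have h := congrFun (congrArg DFunLike.coe (hcomm i.succ j.succ).eq) v
        simpa only [Module.End.mul_apply, ha''apply] using h
      have hrel'' : ∀ i j, a'' i * b'' j - b'' j * a'' i = if i = j then 1 else 0 := by
        intro i j
        have h := congrFun (congrArg DFunLike.coe (hrel i.succ j.succ))
        by_cases hij : i = j
        · subst hij
          rw [if_pos rfl]
          ext v
          have hx := h v
          rw [if_pos rfl] at hx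
          simpa only [LinearMap.sub_apply, Module.End.mul_apply, Module.End.one_apply,
            ha''apply, hb''apply] using hx
        · rw [if_neg hij]
          ext v
          have hx := h v
          rw [if_neg (fun hh => hij (Fin.succ_inj.mp hh))] at hx
          simpa only [LinearMap.sub_apply, Module.End.mul_apply, LinearMap.zero_apply,
            ha''apply, hb''apply] using hx
      have hscal'' : ∀ i, ∃ β : E', a'' i ^ p = algebraMap E' (Module.End E' V) β := by
        intro i
        obtain ⟨β, hβ⟩ := hscal i.succ
        refine ⟨algebraMap E E' β, ?_⟩
        ext v
        rw [pow_apply_eq (a'' i) (a i.succ) (ha''apply i) p v]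
        have hx := congrFun (congrArg DFunLike.coe hβ) v
        rw [hx, Module.algebraMap_end_apply, Module.algebraMap_end_apply]
        exact (algebraMap_smul E' β v).symm
      have hdvd := IH E' V a'' b'' hcomm'' hrel'' hscal''
      have hdim : Module.finrank E E' = p := by
        rw [(AdjoinRoot.powerBasis hfne).finrank, AdjoinRoot.powerBasis_dim, hf,
          Polynomial.natDegree_X_pow_sub_C]
      have htower : Module.finrank E E' * Module.finrank E' V = Module.finrank E V :=
        Module.finrank_mul_finrank E E' V
      rw [← htower, hdim, pow_succ, mul_comm (p ^ n) p]
      exact mul_dvd_mul_left p hdvd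
/-- `X`, `Y`, `z` form a symplectic basis of a Heisenberg Lie algebra `L` of
dimension `2n+1` over `F`: they are a basis of `L`, with brackets
`⁅X i, Y i⁆ = z` and all other brackets of basis vectors zero. -/
structure IsHeisenbergBasis (F : Type*) [Field F] {n : ℕ} {L : Type*}
    [LieRing L] [LieAlgebra F L] (X Y : Fin n → L) (z : L) : Prop where
  indep : LinearIndependent F (Sum.elim X (Sum.elim Y fun _ : Unit => z))
  span : Submodule.span F (Set.range (Sum.elim X (Sum.elim Y fun _ : Unit => z))) = ⊤
  lie_xy : ∀ i j, ⁅X i, Y j⁆ = if i = j then z else 0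
  lie_xx : ∀ i j, ⁅X i, X j⁆ = 0
  lie_yy : ∀ i j, ⁅Y i, Y j⁆ = 0
  lie_xz : ∀ i, ⁅X i, z⁆ = 0
  lie_yz : ∀ i, ⁅Y i, z⁆ = 0

attribute [local instance 100] LieRing.ofAssociativeRing

set_option maxHeartbeats 4000000 in
set_option synthInstance.maxHeartbeats 400000 in
theorem heisenberg_faithful_irreducible_pow_dvd_dim
    (F : Type*) [Field F] (p : ℕ) [Fact p.Prime] [CharP F p]
    {n : ℕ} {L : Type*} [LieRing L] [LieAlgebra F L]
    (X Y : Fin n → L) (z : L) (hH : IsHeisenbergBasis F X Y z)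
    (V : Type*) [AddCommGroup V] [Module F V] [FiniteDimensional F V]
    (R : L →ₗ⁅F⁆ Module.End F V)
    (hinj : Function.Injective R)
    (hirr : ∀ U : Submodule F V, (∀ a : L, ∀ v ∈ U, R a v ∈ U) → U = ⊥ ∨ U = ⊤) :
    p ^ n ∣ Module.finrank F V := by
  classical
  have hz : z ≠ 0 := by
    have := hH.indep.ne_zero (Sum.inr (Sum.inr ()))
    simpa using this
  have hVnt : Nontrivial V := by
    by_contra h
    rw [not_nontrivial_iff_subsingleton] at h
    haveI := h
    haveI : Subsingleton (Module.End F V) :=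
      ⟨fun f g => LinearMap.ext fun v => Subsingleton.elim _ _⟩
    exact hz (hinj (Subsingleton.elim (R z) (R 0)))
  haveI : Nontrivial (Module.End F V) := by
    obtain ⟨w, hw⟩ := exists_ne (0 : V)
    exact ⟨1, 0, fun h => hw (by simpa using congrFun (congrArg DFunLike.coe h) w)⟩
  haveI : CharP (Module.End F V) p :=
    charP_of_injective_algebraMap (algebraMap F (Module.End F V)).injective p
  have hc0 : R z ≠ 0 := fun h => hz (hinj (by rw [h, map_zero]))
  have hbr : ∀ u w : L, R u * R w - R w * R u = R ⁅u, w⁆ := by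
    intro u w
    rw [LieHom.map_lie, Ring.lie_def]
  -- commuting with the image of the basis implies commuting with everything
  have comm_all : ∀ T : Module.End F V,
      (∀ i, Commute (R (X i)) T) → (∀ i, Commute (R (Y i)) T) → Commute (R z) T →
      ∀ l : L, Commute (R l) T := by
    intro T hX hY hz' l
    have hmem : l ∈ Submodule.span F (Set.range (Sum.elim X (Sum.elim Y fun _ : Unit => z))) := by
      rw [hH.span]; trivial
    set U : Submodule F L :=
      { carrier := {l : L | Commute (R l) T}
        add_mem' := by
          intro u w hu hw
          show Commute (R (u + w)) T
          rw [map_add]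
          exact Commute.add_left hu hw
        zero_mem' := by
          show Commute (R 0) T
          rw [map_zero]
          exact Commute.zero_left T
        smul_mem' := by
          intro t u hu
          show Commute (R (t • u)) T
          rw [map_smul]
          exact Commute.smul_left hu t } with hU
    have hsub : Set.range (Sum.elim X (Sum.elim Y fun _ : Unit => z)) ⊆ U := by
      rintro x ⟨(i | i | u), rfl⟩
      · exact hX i
      · exact hY i
      · exact hz'
    exact Submodule.span_le.mpr hsub hmem
  -- Schur's lemma
  have schur : ∀ T : Module.End F V, (∀ l : L, Commute (R l) T) → T ≠ 0 →
      Function.Bijective T := by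
    intro T hT hT0
    constructor
    · rw [← LinearMap.ker_eq_bot]
      rcases hirr (LinearMap.ker T) (fun l v hv => by
        rw [LinearMap.mem_ker] at hv ⊢
        calc T (R l v) = (T * R l) v := rfl
          _ = (R l * T) v := by rw [(hT l).eq]
          _ = R l (T v) := rfl
          _ = 0 := by rw [hv, map_zero]) with h | h
      · exact h
      · refine absurd (LinearMap.ext fun v => ?_) hT0
        have hv : v ∈ LinearMap.ker T := h ▸ Submodule.mem_top
        simpa using hv
    · rw [← LinearMap.range_eq_top]
      rcases hirr (LinearMap.range T) (fun l v hv => by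
        rw [LinearMap.mem_range] at hv ⊢
        obtain ⟨w, rfl⟩ := hv
        exact ⟨R l w, by
          calc T (R l w) = (T * R l) w := rfl
            _ = (R l * T) w := by rw [(hT l).eq]
            _ = R l (T w) := rfl⟩) with h | h
      · exfalso
        apply hT0
        refine LinearMap.ext fun v => ?_
        have hv : T v ∈ LinearMap.range T := LinearMap.mem_range_self T v
        rw [h] at hv
        simpa using hv
      · exact h
  -- commutation of generators
  have hcXz : ∀ i, Commute (R (X i)) (R z) := by
    intro i
    have h := hbr (X i) z
    rw [hH.lie_xz i, map_zero] at h
    exact (show Commute (R (X i)) (R z) from sub_eq_zero.mp h)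
  have hcYz : ∀ i, Commute (R (Y i)) (R z) := by
    intro i
    have h := hbr (Y i) z
    rw [hH.lie_yz i, map_zero] at h
    exact (show Commute (R (Y i)) (R z) from sub_eq_zero.mp h)
  have hcc : ∀ l : L, Commute (R l) (R z) := comm_all (R z) hcXz hcYz (Commute.refl _)
  have haij : ∀ i j, Commute (R (X i)) (R (X j)) := by
    intro i j
    have h := hbr (X i) (X j)
    rw [hH.lie_xx i j, map_zero] at h
    exact (show Commute (R (X i)) (R (X j)) from sub_eq_zero.mp h)
  have hXY : ∀ i j, R (X i) * R (Y j) - R (Y j) * R (X i) =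
      if i = j then R z else 0 := by
    intro i j
    have h := hbr (X i) (Y j)
    by_cases hij : i = j
    · subst hij
      rw [hH.lie_xy i i, if_pos rfl] at h
      rw [if_pos rfl]
      exact h
    · rw [hH.lie_xy i j, if_neg hij, map_zero] at h
      rw [if_neg hij]
      exact h
  -- the commuting generators of the field E
  set gens : Set (Module.End F V) :=
    insert (R z) (Set.range fun i : Fin n => R (X i) ^ p) with hgens
  have hgen_comm : ∀ T ∈ gens, ∀ l : L, Commute (R l) T := by
    intro T hT l
    rcases Set.mem_insert_iff.mp hT with rfl | ⟨i, rfl⟩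
    · exact hcc l
    · -- T = R (X i) ^ p
      refine comm_all _ (fun j => ((haij j i).pow_right p)) (fun j => ?_) ?_ l
      · -- Commute (R (Y j)) (R (X i) ^ p)
        have h1 : R (X i) * R (Y j) = R (Y j) * R (X i) + (if i = j then R z else 0) := by
          rw [← hXY i j]; abel
        have h2 : R (X i) * (if i = j then R z else 0) =
            (if i = j then R z else 0) * R (X i) := by
          by_cases hij : i = j
          · simp only [if_pos hij]; exact (hcXz i).eq
          · simp only [if_neg hij]; rw [mul_zero, zero_mul]
        exact (pow_char_commute p (R (X i)) (R (Y j)) _ h1 h2).symm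
      · exact ((hcXz i).symm.pow_right p)
  have hgens_comm : ∀ x ∈ gens, ∀ y ∈ gens, x * y = y * x := by
    intro x hx y hy
    rcases Set.mem_insert_iff.mp hx with rfl | ⟨i, rfl⟩
    · rcases Set.mem_insert_iff.mp hy with rfl | ⟨j, rfl⟩
      · rfl
      · exact ((hcXz j).symm.pow_right p).eq
    · rcases Set.mem_insert_iff.mp hy with rfl | ⟨j, rfl⟩
      · exact (((hcXz i).symm.pow_right p).eq).symm
      · exact (((haij i j).pow_left p).pow_right p).eq
  set E := Algebra.adjoin F gens with hE
  have hEcent : ∀ x : E, ∀ l : L, Commute (R l) (x : Module.End F V) := by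
    have hle : Algebra.adjoin F gens ≤
        Subalgebra.centralizer F (Set.range fun l : L => R l) := by
      apply Algebra.adjoin_le
      intro s hs
      rw [SetLike.mem_coe, Subalgebra.mem_centralizer_iff]
      rintro g ⟨l, rfl⟩
      exact (hgen_comm s hs l).eq
    intro x l
    have := (Subalgebra.mem_centralizer_iff F).mp (hle x.2) (R l) ⟨l, rfl⟩
    exact (show Commute (R l) (x : Module.End F V) from this)
  letI : CommRing E := Algebra.adjoinCommRingOfComm F hgens_comm
  haveI : FiniteDimensional F E := inferInstance
  have hcoe_mul : ∀ x y : E, ((x * y : E) : Module.End F V) =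
      (x : Module.End F V) * (y : Module.End F V) := fun x y => rfl
  have hbij : ∀ x : E, x ≠ 0 → Function.Bijective (x : Module.End F V) := by
    intro x hx
    refine schur _ (hEcent x) ?_
    intro h0
    exact hx (Subtype.ext h0)
  haveI : NoZeroDivisors E := by
    constructor
    intro x y hxy
    by_cases hy : y = 0
    · right; exact hy
    · left
      have hb := hbij y hy
      refine Subtype.ext ?_
      show (x : Module.End F V) = (0 : Module.End F V)
      refine LinearMap.ext fun v => ?_
      obtain ⟨w, rfl⟩ := hb.2 v
      have h0 : ((x * y : E) : Module.End F V) w = 0 := by rw [hxy]; rfl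
      rw [hcoe_mul] at h0
      exact h0
  have hEfield : IsField E := by
    refine ⟨?_, mul_comm, ?_⟩
    · refine ⟨0, 1, fun h => ?_⟩
      have h1 : ((0 : E) : Module.End F V) = ((1 : E) : Module.End F V) := by rw [h]
      rw [ZeroMemClass.coe_zero, OneMemClass.coe_one] at h1
      exact zero_ne_one h1
    · intro x hx
      have hinjm : Function.Injective (LinearMap.mulLeft F x : E →ₗ[F] E) := by
        intro u w huw
        simp only [LinearMap.mulLeft_apply] at huw
        exact mul_left_cancel₀ hx huw
      obtain ⟨y, hy⟩ := LinearMap.surjective_of_injective hinjm 1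
      refine ⟨y, ?_⟩
      rw [← hy, LinearMap.mulLeft_apply]
  letI : Field E := { Subalgebra.toRing E, hEfield.toField with }
  haveI : CharP E p := charP_of_injective_algebraMap (algebraMap F E).injective p
  letI : Module E V := Module.compHom V ((Algebra.adjoin F gens).val.toRingHom)
  have hEsmul : ∀ (x : E) (v : V), x • v = (x : Module.End F V) v := fun _ _ => rfl
  letI : IsScalarTower F E V := ⟨fun t x v => by
    simp only [hEsmul]
    have hco : ((t • x : E) : Module.End F V) = t • (x : Module.End F V) := rfl
    rw [hco, LinearMap.smul_apply]⟩
  haveI : FiniteDimensional E V := @FiniteDimensional.right F E V _ _ _ _ _ _ ‹IsScalarTower F E V› _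
  letI : IsScalarTower E E V := IsScalarTower.left E
  letI : SMulCommClass E E V := smulCommClass_self E V
  letI : Algebra E (Module.End E V) := @Module.End.instAlgebra E E V _ _ _ _ _ (smulCommClass_self E V) _ (IsScalarTower.left E)
  -- the element c' and the operators
  set c' : E := ⟨R z, Algebra.subset_adjoin (Set.mem_insert _ _)⟩ with hc'
  have hc'0 : c' ≠ 0 := by
    intro h
    apply hc0
    have := congrArg (fun x : E => (x : Module.End F V)) h
    exact this
  set D : Fin n → Module.End F V :=
    fun j => ((c'⁻¹ : E) : Module.End F V) * R (Y j) with hD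
  set a' : Fin n → Module.End E V := fun i =>
    { toFun := R (X i)
      map_add' := (R (X i)).map_add
      map_smul' := fun x v => by
        simp only [RingHom.id_apply, hEsmul]
        exact congrFun (congrArg DFunLike.coe (hEcent x (X i)).eq) v } with ha'
  have hDcommE : ∀ (j : Fin n) (x : E),
      (x : Module.End F V) * D j = D j * (x : Module.End F V) := by
    intro j x
    have h1 : (x : Module.End F V) * ((c'⁻¹ : E) : Module.End F V) =
        ((c'⁻¹ : E) : Module.End F V) * (x : Module.End F V) := by
      rw [← hcoe_mul, ← hcoe_mul, mul_comm]
    have h2 := (hEcent x (Y j)).eq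
    rw [hD]
    calc (x : Module.End F V) * (((c'⁻¹ : E) : Module.End F V) * R (Y j))
        = ((x : Module.End F V) * ((c'⁻¹ : E) : Module.End F V)) * R (Y j) := by
          rw [mul_assoc]
      _ = (((c'⁻¹ : E) : Module.End F V) * (x : Module.End F V)) * R (Y j) := by rw [h1]
      _ = ((c'⁻¹ : E) : Module.End F V) * ((x : Module.End F V) * R (Y j)) := by
          rw [mul_assoc]
      _ = ((c'⁻¹ : E) : Module.End F V) * (R (Y j) * (x : Module.End F V)) := by rw [h2]
      _ = (((c'⁻¹ : E) : Module.End F V) * R (Y j)) * (x : Module.End F V) := by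
          rw [mul_assoc]
  set b' : Fin n → Module.End E V := fun j =>
    { toFun := D j
      map_add' := (D j).map_add
      map_smul' := fun x v => by
        simp only [RingHom.id_apply, hEsmul]
        exact (congrFun (congrArg DFunLike.coe (hDcommE j x)) v).symm } with hb'
  have ha'apply : ∀ (i : Fin n) (v : V), a' i v = R (X i) v := fun _ _ => rfl
  have hb'apply : ∀ (j : Fin n) (v : V), b' j v = D j v := fun _ _ => rfl
  -- the End F V level relation
  have hend : ∀ i j, R (X i) * D j - D j * R (X i) =
      if i = j then (1 : Module.End F V) else 0 := by
    intro i j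
    have hca : Commute (R (X i)) ((c'⁻¹ : E) : Module.End F V) := (hEcent c'⁻¹ (X i))
    have e1 : R (X i) * D j = ((c'⁻¹ : E) : Module.End F V) * (R (X i) * R (Y j)) := by
      rw [hD, ← mul_assoc, hca.eq, mul_assoc]
    have e2 : D j * R (X i) = ((c'⁻¹ : E) : Module.End F V) * (R (Y j) * R (X i)) := by
      rw [hD, mul_assoc]
    rw [e1, e2, ← mul_sub, hXY]
    by_cases hij : i = j
    · simp only [if_pos hij]
      have hmm : ((c'⁻¹ : E) : Module.End F V) * ((c' : E) : Module.End F V) =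
          ((c'⁻¹ * c' : E) : Module.End F V) := rfl
      rw [show R z = ((c' : E) : Module.End F V) from rfl, hmm,
        inv_mul_cancel₀ hc'0]
      rfl
    · simp only [if_neg hij]
      rw [mul_zero]
  have hcomm0 : ∀ i j, Commute (a' i) (a' j) := by
    intro i j
    ext v
    have h := congrFun (congrArg DFunLike.coe (haij i j).eq) v
    simpa only [Module.End.mul_apply, ha'apply] using h
  have hrel0 : ∀ i j, a' i * b' j - b' j * a' i = if i = j then 1 else 0 := by
    intro i j
    have h := congrFun (congrArg DFunLike.coe (hend i j))
    by_cases hij : i = j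
    · subst hij
      rw [if_pos rfl]
      ext v
      have hx := h v
      rw [if_pos rfl] at hx
      simpa only [LinearMap.sub_apply, Module.End.mul_apply, Module.End.one_apply,
        ha'apply, hb'apply] using hx
    · rw [if_neg hij]
      ext v
      have hx := h v
      rw [if_neg hij] at hx
      simpa only [LinearMap.sub_apply, Module.End.mul_apply, LinearMap.zero_apply,
        ha'apply, hb'apply] using hx
  have hscal0 : ∀ i, ∃ β : E, a' i ^ p = algebraMap E (Module.End E V) β := by
    intro i
    refine ⟨⟨R (X i) ^ p, Algebra.subset_adjoin (Set.mem_insert_iff.mpr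
      (Or.inr ⟨i, rfl⟩))⟩, ?_⟩
    ext v
    rw [pow_apply_eq (a' i) (R (X i)) (ha'apply i) p v]
    rfl
  have hdvd := weyl_key p n E V a' b' hcomm0 hrel0 hscal0
  have htower : Module.finrank F E * Module.finrank E V = Module.finrank F V :=
    @Module.finrank_mul_finrank F E V _ _ _ _ _ _ ‹IsScalarTower F E V› _ _ _ _
  refine dvd_trans hdvd ?_
  rw [← htower]
  exact dvd_mul_left _ _
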